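/- Let δ be a degree −1 endomorphism of E and let α be a degree +1 endomorphism of E satisfying δ∘α + α∘δ = id. Then for every degree-0 endomorphism f of E one has Trs(α ∘ (δ∘f − f∘δ)) = Trs(f). (This is the algebraic content of identity (2.15) in Proposition 2.2.) -/

import Mathlib

/- STATEMENT 1 ... -/
theorem stmt1 {V : Type} [AddCommGroup V] [Module ℂ V] [FiniteDimensional ℂ V]
    (p q : ℤ) (hpq : p ≤ q) (π : ℤ → Module.End ℂ V)
    (hidem : ∀ i, π i * π i = π i)
    (horth : ∀ i j, i ≠ j → π i * π j = 0)
    (hsupp : ∀ i, i ∉ Finset.Icc p q → π i = 0)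
    (hsum : ∑ i ∈ Finset.Icc p q, π i = 1)
    (δ α f : Module.End ℂ V)
    (hδ : ∀ i, δ * π i = π (i - 1) * δ)
    (hα : ∀ i, α * π i = π (i + 1) * α)
    (hf : ∀ i, f * π i = π i * f)
    (hhom : δ * α + α * δ = 1) :
    ∑ i ∈ Finset.Icc p q, ((Int.negOnePow i : ℤ) : ℂ) *
        LinearMap.trace ℂ V (π i * (α * (δ * f - f * δ)))
      = ∑ i ∈ Finset.Icc p q, ((Int.negOnePow i : ℤ) : ℂ) *
        LinearMap.trace ℂ V (π i * f) := by
  set T : Module.End ℂ V →ₗ[ℂ] ℂ := LinearMap.trace ℂ V with hT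
  set g : Module.End ℂ V := δ * (α * f) with hg
  set c : ℤ → ℂ := fun i => ((Int.negOnePow i : ℤ) : ℂ) with hc
  have hcshift : ∀ j : ℤ, c (1 + j) = - c j := by
    intro j
    simp only [hc, Int.negOnePow_add, Int.negOnePow_one, Units.val_mul, Units.val_neg, Units.val_one,
      Int.cast_mul, Int.cast_neg, Int.cast_one, neg_one_mul]
  -- trace shift lemma
  have hshift : ∀ i, T (π i * (α * (f * δ))) = T (π (i-1) * g) := by
    intro i
    have h1 : π i * (α * (f * δ)) = (π i * (α * f)) * δ := by
      simp only [mul_assoc]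
    rw [h1, LinearMap.trace_mul_comm, ← mul_assoc, hδ i, hg, mul_assoc]
  -- boundary term vanishes
  have hqzero : T (π q * g) = 0 := by
    have hπ : π (q+1) = 0 := hsupp (q+1) (by simp [Finset.mem_Icc])
    have hαq : α * π q = 0 := by rw [hα q, hπ, zero_mul]
    have h2 : g * π q = 0 := by
      calc g * π q = δ * (α * (f * π q)) := by simp [hg, mul_assoc]
        _ = δ * (α * (π q * f)) := by rw [hf q]
        _ = δ * ((α * π q) * f) := by simp [mul_assoc]
        _ = 0 := by rw [hαq, zero_mul, mul_zero]
    rw [hT, LinearMap.trace_mul_comm, ← hT, h2, map_zero]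
  -- extended sums
  have hsum_ext : ∑ j ∈ Finset.Icc (p-1) (q-1), c j * T (π j * g)
      = ∑ j ∈ Finset.Icc p q, c j * T (π j * g) := by
    have h1 : ∑ j ∈ Finset.Icc (p-1) (q-1), c j * T (π j * g)
        = ∑ j ∈ Finset.Icc (p-1) q, c j * T (π j * g) := by
      apply Finset.sum_subset
      · apply Finset.Icc_subset_Icc_right; omega
      · intro x hx hx'
        have : x = q := by simp [Finset.mem_Icc] at hx hx' ⊢; omega
        rw [this, hqzero, mul_zero]
    have h2 : ∑ j ∈ Finset.Icc p q, c j * T (π j * g)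
        = ∑ j ∈ Finset.Icc (p-1) q, c j * T (π j * g) := by
      apply Finset.sum_subset
      · apply Finset.Icc_subset_Icc_left; omega
      · intro x hx hx'
        have hx0 : x = p - 1 := by simp [Finset.mem_Icc] at hx hx' ⊢; omega
        have : π x = 0 := hsupp x (by simp [Finset.mem_Icc]; omega)
        rw [this, zero_mul, map_zero, mul_zero]
    rw [h1, h2]
  -- the reindexing
  have hmap : Finset.Icc p q =
      Finset.map (addLeftEmbedding 1) (Finset.Icc (p-1) (q-1)) := by
    rw [Finset.map_add_left_Icc]
    congr 1 <;> ring
  have hneg : ∑ i ∈ Finset.Icc p q, c i * T (π i * (α * (f * δ)))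
      = - ∑ i ∈ Finset.Icc p q, c i * T (π i * g) := by
    calc ∑ i ∈ Finset.Icc p q, c i * T (π i * (α * (f * δ)))
        = ∑ i ∈ Finset.Icc p q, c i * T (π (i-1) * g) := by
          exact Finset.sum_congr rfl fun i _ => by rw [hshift]
      _ = ∑ j ∈ Finset.Icc (p-1) (q-1), c (1+j) * T (π (1+j-1) * g) := by
          rw [hmap, Finset.sum_map]
          rfl
      _ = ∑ j ∈ Finset.Icc (p-1) (q-1), -(c j * T (π j * g)) := by
          refine Finset.sum_congr rfl fun j _ => ?_
          rw [hcshift j, show 1 + j - 1 = j by ring, neg_mul]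
      _ = - ∑ j ∈ Finset.Icc (p-1) (q-1), c j * T (π j * g) := by
          rw [Finset.sum_neg_distrib]
      _ = - ∑ i ∈ Finset.Icc p q, c i * T (π i * g) := by rw [hsum_ext]
  -- combine
  have key : ∀ i, π i * (α * (δ * f)) + π i * g = π i * f := by
    intro i
    have h1 : α * (δ * f) + δ * (α * f) = f := by
      rw [← mul_assoc, ← mul_assoc, ← add_mul, add_comm, hhom, one_mul]
    rw [hg, ← mul_add, h1]
  calc ∑ i ∈ Finset.Icc p q, c i * T (π i * (α * (δ * f - f * δ)))
      = ∑ i ∈ Finset.Icc p q,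
          (c i * T (π i * (α * (δ * f))) - c i * T (π i * (α * (f * δ)))) := by
        refine Finset.sum_congr rfl fun i _ => ?_
        rw [mul_sub, mul_sub, map_sub, mul_sub]
    _ = ∑ i ∈ Finset.Icc p q, c i * T (π i * (α * (δ * f)))
        - ∑ i ∈ Finset.Icc p q, c i * T (π i * (α * (f * δ))) := by
        rw [Finset.sum_sub_distrib]
    _ = ∑ i ∈ Finset.Icc p q, c i * T (π i * (α * (δ * f)))
        + ∑ i ∈ Finset.Icc p q, c i * T (π i * g) := by
        rw [hneg]; ring
    _ = ∑ i ∈ Finset.Icc p q, c i * T (π i * f) := by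
        rw [← Finset.sum_add_distrib]
        refine Finset.sum_congr rfl fun i _ => ?_
        rw [← mul_add, ← map_add, key i]
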